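/- arXiv:1702.08857 — 3 statements merged into one kernel-verified Lean document; each statement's English description precedes it below -/
import Mathlib

section
/- Let N be the unique Lie algebra derivation of L_n with N(x_i) = x_i for all i (the Euler derivation), and let N_F : F_n → F_n be the induced linear map satisfying N_F⟨a,b⟩ = ⟨N a, b⟩ + ⟨a, N b⟩. Then N_F is bijective; moreover F_n is the sum of the eigenspaces ker(N_F − m·id) over integers m ≥ 2. -/
open TensorProduct

/-- The subspace of `L ⊗[k] L` spanned by the elements `a⊗b − b⊗a` and
`a⊗[b,c] − [a,b]⊗c`. -/
def Frel (k L : Type*) [Field k] [LieRing L] [LieAlgebra k L] :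
    Submodule k (L ⊗[k] L) :=
  Submodule.span k
    ({x | ∃ a b : L, x = a ⊗ₜ[k] b - b ⊗ₜ[k] a} ∪
     {x | ∃ a b c : L, x = a ⊗ₜ[k] ⁅b, c⁆ - ⁅a, b⁆ ⊗ₜ[k] c})

/-- `F(L)`, the quotient of `L ⊗[k] L` by the relations. -/
abbrev FF (k L : Type*) [Field k] [LieRing L] [LieAlgebra k L] :=
  (L ⊗[k] L) ⧸ Frel k L

/-- `⟨a, b⟩`, the class of `a ⊗ b` in `F(L)`. -/
noncomputable def pair {k L : Type*} [Field k] [LieRing L] [LieAlgebra k L] (a b : L) :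
    FF k L :=
  Submodule.Quotient.mk (a ⊗ₜ[k] b)

/-- `L_n`, the free Lie algebra on generators `x_1, …, x_n` (the generator `j : Fin n`
corresponds to `x_{j+1}`). -/
abbrev Ln (k : Type*) [Field k] (n : ℕ) := FreeLieAlgebra k (Fin n)

section auxpair

variable {k L : Type*} [Field k] [LieRing L] [LieAlgebra k L]

lemma pair_eq_mkQ (a b : L) : pair a b = (Frel k L).mkQ (a ⊗ₜ[k] b) := rfl

lemma pair_add_left (a a' b : L) : (pair (a + a') b : FF k L) = pair a b + pair a' b := by
  simp [pair_eq_mkQ, TensorProduct.add_tmul]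

lemma pair_add_right (a b b' : L) : (pair a (b + b') : FF k L) = pair a b + pair a b' := by
  simp [pair_eq_mkQ, TensorProduct.tmul_add]

lemma pair_smul_left (c : k) (a b : L) : (pair (c • a) b : FF k L) = c • pair a b := by
  rw [pair_eq_mkQ, ← TensorProduct.smul_tmul', map_smul]; rfl

lemma pair_smul_right (c : k) (a b : L) : (pair a (c • b) : FF k L) = c • pair a b := by
  rw [pair_eq_mkQ, TensorProduct.tmul_smul, map_smul]; rfl

lemma pair_zero_left (b : L) : (pair (0 : L) b : FF k L) = 0 := by
  simp [pair_eq_mkQ]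

lemma pair_zero_right (a : L) : (pair a (0 : L) : FF k L) = 0 := by
  simp [pair_eq_mkQ]

end auxpair

/-- the Euler derivation `N` of `L_n` (the derivation with `N x_i = x_i`)
induces a linear map `N_F : F_n → F_n` with `N_F⟨a,b⟩ = ⟨N a, b⟩ + ⟨a, N b⟩`; this map
is bijective, and `F_n` is the sum of the eigenspaces `ker (N_F − m·id)` over integers
`m ≥ 2`. -/
theorem statement_3 (k : Type*) [Field k] [CharZero k] (n : ℕ)
    (N : Ln k n →ₗ[k] Ln k n)
    (hder : ∀ a b : Ln k n, N ⁅a, b⁆ = ⁅N a, b⁆ + ⁅a, N b⁆)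
    (hgen : ∀ i : Fin n, N (FreeLieAlgebra.of k i) = FreeLieAlgebra.of k i)
    (NF : FF k (Ln k n) →ₗ[k] FF k (Ln k n))
    (hNF : ∀ a b : Ln k n, NF (pair a b) = pair (N a) b + pair a (N b)) :
    Function.Bijective NF ∧
    (⨆ m : ℕ, ⨆ _ : 2 ≤ m,
        LinearMap.ker (NF - (m : k) • (LinearMap.id : FF k (Ln k n) →ₗ[k] FF k (Ln k n))))
      = ⊤ := by
  classical
  set L := Ln k n
  -- eigenspaces of N
  set E : ℕ → Submodule k L :=
    fun m => LinearMap.ker (N - (m : k) • LinearMap.id) with hE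
  have hEmem : ∀ (m : ℕ) (a : L), a ∈ E m ↔ N a = (m : k) • a := by
    intro m a
    simp [hE, LinearMap.mem_ker, sub_eq_zero]
  -- the sum of the positive eigenspaces of N
  set P : Submodule k L := ⨆ m : {m : ℕ // 1 ≤ m}, E m with hPdef
  have hEleP : ∀ (m : ℕ), 1 ≤ m → E m ≤ P := by
    intro m hm
    exact le_iSup (fun m : {m : ℕ // 1 ≤ m} => E m) ⟨m, hm⟩
  -- eigenvectors multiply (bracket) to eigenvectors
  have hbr : ∀ (p q : ℕ) (a b : L), a ∈ E p → b ∈ E q → ⁅a, b⁆ ∈ E (p + q) := by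
    intro p q a b ha hb
    rw [hEmem] at ha hb ⊢
    rw [hder, ha, hb]
    rw [smul_lie, LieAlgebra.lie_smul, Nat.cast_add, add_smul]
  -- P is closed under the bracket
  have hP_lie : ∀ a ∈ P, ∀ b ∈ P, ⁅a, b⁆ ∈ P := by
    intro a ha
    refine Submodule.iSup_induction (motive := fun a => ∀ b ∈ P, ⁅a, b⁆ ∈ P) _ ha ?_ ?_ ?_
    · rintro ⟨p, hp⟩ a ha b hb
      refine Submodule.iSup_induction (motive := fun b => ⁅a, b⁆ ∈ P) _ hb ?_ ?_ ?_
      · rintro ⟨q, hq⟩ b hbq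
        exact hEleP (p + q) (le_trans hp (Nat.le_add_right p q)) (hbr p q a b ha hbq)
      · simp
      · intro x y hx hy
        rw [lie_add]; exact Submodule.add_mem _ hx hy
    · intro b _; simp
    · intro x y hx hy b hb
      rw [add_lie]; exact Submodule.add_mem _ (hx b hb) (hy b hb)
  -- P is all of L, by the universal property of the free Lie algebra
  have hPtop : P = ⊤ := by
    set K : LieSubalgebra k L :=
      { toSubmodule := P, lie_mem' := fun {x y} hx hy => hP_lie x hx y hy } with hK
    have hofP : ∀ i : Fin n, FreeLieAlgebra.of k i ∈ P := by
      intro i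
      refine hEleP 1 le_rfl ?_
      rw [hEmem, hgen i, Nat.cast_one, one_smul]
    set g : FreeLieAlgebra k (Fin n) →ₗ⁅k⁆ K :=
      FreeLieAlgebra.lift k (fun i => (⟨FreeLieAlgebra.of k i, hofP i⟩ : K)) with hg
    have hcomp : K.incl.comp g = LieHom.id := by
      apply FreeLieAlgebra.hom_ext
      intro i
      simp [hg, FreeLieAlgebra.lift_of_apply, LieSubalgebra.coe_incl]
    rw [eq_top_iff]
    intro x _
    have : K.incl (g x) = x := by
      have := congrArg (fun F => F x) hcomp
      simpa using this
    rw [← this]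
    exact (g x).2
  -- the target supremum in FF
  set T : Submodule k (FF k L) := ⨆ m : ℕ, ⨆ _ : 2 ≤ m,
      LinearMap.ker (NF - (m : k) • (LinearMap.id : FF k L →ₗ[k] FF k L)) with hT
  have hkerT : ∀ m : ℕ, 2 ≤ m →
      LinearMap.ker (NF - (m : k) • (LinearMap.id : FF k L →ₗ[k] FF k L)) ≤ T := by
    intro m hm
    intro v hv
    exact Submodule.mem_iSup_of_mem m (Submodule.mem_iSup_of_mem hm hv)
  -- all pairs lie in T
  have hpairT : ∀ a b : L, pair a b ∈ T := by
    have key : ∀ (p : ℕ), 1 ≤ p → ∀ a ∈ E p, ∀ (q : ℕ), 1 ≤ q → ∀ b ∈ E q,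
        pair a b ∈ T := by
      intro p hp a ha q hq b hb
      rw [hEmem] at ha hb
      refine hkerT (p + q) (add_le_add hp hq) ?_
      rw [LinearMap.mem_ker, LinearMap.sub_apply, LinearMap.smul_apply, LinearMap.id_apply,
        hNF, ha, hb, pair_smul_left, pair_smul_right, Nat.cast_add, add_smul, sub_self]
    intro a b
    have ha : a ∈ P := hPtop ▸ Submodule.mem_top
    refine Submodule.iSup_induction (motive := fun a => ∀ b : L, pair a b ∈ T) _ ha ?_ ?_ ?_ b
    · rintro ⟨p, hp⟩ a hap b
      have hb : b ∈ P := hPtop ▸ Submodule.mem_top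
      refine Submodule.iSup_induction (motive := fun b => pair a b ∈ T) _ hb ?_ ?_ ?_
      · rintro ⟨q, hq⟩ b hbq
        exact key p hp a hap q hq b hbq
      · show pair a (0 : L) ∈ T
        rw [pair_zero_right]; exact Submodule.zero_mem _
      · intro x y hx hy
        show pair a (x + y) ∈ T
        rw [pair_add_right]; exact Submodule.add_mem _ hx hy
    · intro b
      show pair (0 : L) b ∈ T
      rw [pair_zero_left]; exact Submodule.zero_mem _
    · intro x y hx hy b
      show pair (x + y) b ∈ T
      rw [pair_add_left]; exact Submodule.add_mem _ (hx b) (hy b)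
  -- T = ⊤
  have hTtop : T = ⊤ := by
    rw [eq_top_iff]
    rintro x -
    obtain ⟨t, rfl⟩ := Submodule.Quotient.mk_surjective (Frel k L) x
    induction t using TensorProduct.induction_on with
    | zero => exact Submodule.zero_mem _
    | tmul a b => exact hpairT a b
    | add s t hs ht =>
        rw [Submodule.Quotient.mk_add]
        exact Submodule.add_mem _ hs ht
  -- surjectivity
  have hsurj : Function.Surjective NF := by
    rw [← LinearMap.range_eq_top, eq_top_iff, ← hTtop]
    refine iSup_le fun m => iSup_le fun hm => ?_
    intro v hv
    rw [LinearMap.mem_ker, LinearMap.sub_apply, LinearMap.smul_apply, LinearMap.id_apply,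
      sub_eq_zero] at hv
    have hm0 : (m : k) ≠ 0 := Nat.cast_ne_zero.mpr (by omega)
    refine ⟨(m : k)⁻¹ • v, ?_⟩
    rw [map_smul, hv, smul_smul, inv_mul_cancel₀ hm0, one_smul]
  -- injectivity
  have hinj : Function.Injective NF := by
    rw [← LinearMap.ker_eq_bot]
    rw [eq_bot_iff]
    intro x hx
    have hx0 : x ∈ Module.End.eigenspace NF (0 : k) := by
      rw [Module.End.eigenspace_zero]; exact hx
    have hxS : x ∈ ⨆ μ ∈ {μ : k | μ ≠ 0}, Module.End.eigenspace NF μ := by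
      have hle : T ≤ ⨆ μ ∈ {μ : k | μ ≠ 0}, Module.End.eigenspace NF μ := by
        refine iSup_le fun m => iSup_le fun hm => ?_
        have hm0 : (m : k) ≠ 0 := Nat.cast_ne_zero.mpr (by omega)
        refine le_trans ?_ (le_iSup₂ (f := fun μ _ => Module.End.eigenspace NF μ) (m : k) hm0)
        rw [Module.End.eigenspace_def, Module.End.one_eq_id]
      exact hle (hTtop ▸ Submodule.mem_top)
    have hdisj := (Module.End.eigenspaces_iSupIndep NF).disjoint_biSup
      (x := (0 : k)) (y := {μ : k | μ ≠ 0}) (by simp)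
    have : x ∈ (⊥ : Submodule k (FF k L)) := by
      rw [← hdisj.eq_bot]
      exact ⟨hx0, hxS⟩
    simpa using this
  exact ⟨⟨hinj, hsurj⟩, hTtop⟩
end

section
/- Every element α ∈ F_n which is multilinear and alternating (i.e. α ∈ H_n) satisfies δα = 0 in F_{n+1}. -/
open TensorProduct

theorem Frel_map_le {k L L' : Type*} [Field k] [LieRing L] [LieAlgebra k L]
    [LieRing L'] [LieAlgebra k L'] (f : L →ₗ⁅k⁆ L') :
    (Frel k L).map (TensorProduct.map f.toLinearMap f.toLinearMap) ≤ Frel k L' := by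
  rw [Frel, Submodule.map_span, Submodule.span_le]
  rintro _ ⟨x, hx, rfl⟩
  apply Submodule.subset_span
  rcases hx with ⟨a, b, rfl⟩ | ⟨a, b, c, rfl⟩
  · exact Or.inl ⟨f a, f b, by simp⟩
  · exact Or.inr ⟨f a, f b, f c, by simp⟩

/-- The linear map `F(f) : F(L) → F(L')` induced by a Lie algebra homomorphism `f`;
it satisfies `F(f)⟨a,b⟩ = ⟨f a, f b⟩`. -/
noncomputable def Fmap {k L L' : Type*} [Field k] [LieRing L] [LieAlgebra k L]
    [LieRing L'] [LieAlgebra k L'] (f : L →ₗ⁅k⁆ L') : FF k L →ₗ[k] FF k L' :=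
  Submodule.mapQ (Frel k L) (Frel k L') (TensorProduct.map f.toLinearMap f.toLinearMap)
    (Submodule.map_le_iff_le_comap.mp (Frel_map_le f))

theorem Fmap_pair {k L L' : Type*} [Field k] [LieRing L] [LieAlgebra k L]
    [LieRing L'] [LieAlgebra k L'] (f : L →ₗ⁅k⁆ L') (a b : L) :
    Fmap f (pair a b) = pair (f a) (f b) := by
  simp [Fmap, pair, Submodule.mapQ_apply]

/-- The value of the coface map `δ_i : L_n → L_{n+1}` on the generator `x_{j+1}`:
`x_m ↦ x_m` for `m < i`, `x_i ↦ x_i + x_{i+1}`, and `x_m ↦ x_{m+1}` for `m > i`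
(with `m = j+1`, 1-based indexing). -/
noncomputable def cofaceGen (k : Type*) [Field k] (n : ℕ) (i : Fin (n + 2)) (j : Fin n) :
    Ln k (n + 1) :=
  if (j : ℕ) + 1 < (i : ℕ) then FreeLieAlgebra.of k j.castSucc
  else if (j : ℕ) + 1 = (i : ℕ) then
    FreeLieAlgebra.of k j.castSucc + FreeLieAlgebra.of k j.succ
  else FreeLieAlgebra.of k j.succ

/-- The coface map `δ_i : L_n → L_{n+1}` as a Lie algebra homomorphism. -/
noncomputable def coface (k : Type*) [Field k] (n : ℕ) (i : Fin (n + 2)) :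
    Ln k n →ₗ⁅k⁆ Ln k (n + 1) :=
  FreeLieAlgebra.lift k (cofaceGen k n i)

/-- The cosimplicial differential `δ = Σ_{i=0}^{n+1} (−1)^i F(δ_i) : F_n → F_{n+1}`. -/
noncomputable def cosimp (k : Type*) [Field k] (n : ℕ) :
    FF k (Ln k n) →ₗ[k] FF k (Ln k (n + 1)) :=
  ∑ i : Fin (n + 2), ((-1 : k) ^ (i : ℕ)) • Fmap (coface k n i)

/-- The Lie algebra endomorphism of `L_n` rescaling the generator `x_{i+1}` by `t`
and fixing the other generators. -/
noncomputable def scaleHom (k : Type*) [Field k] (n : ℕ) (i : Fin n) (t : k) :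
    Ln k n →ₗ⁅k⁆ Ln k n :=
  FreeLieAlgebra.lift k
    (fun j => if j = i then t • FreeLieAlgebra.of k j else FreeLieAlgebra.of k j)

/-- The Lie algebra endomorphism of `L_n` induced by a permutation of the generators,
`x_i ↦ x_{π(i)}`. -/
noncomputable def permHom (k : Type*) [Field k] (n : ℕ) (π : Equiv.Perm (Fin n)) :
    Ln k n →ₗ⁅k⁆ Ln k n :=
  FreeLieAlgebra.lift k (fun j => FreeLieAlgebra.of k (π j))

/-- `H_n ⊆ F_n`: the subspace of elements that are multilinear (rescaling `x_i` by `t`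
multiplies the element by `t`) and alternating (a permutation `π` of the generators
multiplies the element by `sign π`). -/
noncomputable def Hsub (k : Type*) [Field k] (n : ℕ) : Submodule k (FF k (Ln k n)) :=
  (⨅ i : Fin n, ⨅ t : k,
      LinearMap.ker (Fmap (scaleHom k n i t)
        - t • (LinearMap.id : FF k (Ln k n) →ₗ[k] FF k (Ln k n)))) ⊓
  (⨅ π : Equiv.Perm (Fin n),
      LinearMap.ker (Fmap (permHom k n π)
        - ((Equiv.Perm.sign π : ℤ) : k)
            • (LinearMap.id : FF k (Ln k n) →ₗ[k] FF k (Ln k n))))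


/-! ### Auxiliary material for statement 5 -/

open MvPolynomial in
private lemma bind_two {k : Type*} [Field k] (d : Fin 2 →₀ ℕ) (r : k) :
    MvPolynomial.bind₁ (fun i : Fin 2 => MvPolynomial.C (2:k) * MvPolynomial.X i)
      (MvPolynomial.monomial d r)
      = MvPolynomial.monomial d (2 ^ (d 0 + d 1) * r) := by
  rw [MvPolynomial.bind₁_monomial]
  have h1 : ∀ i ∈ d.support, ((C (2:k) * X i : MvPolynomial (Fin 2) k)) ^ d i
      = C ((2:k) ^ d i) * X i ^ d i := by
    intro i _; rw [mul_pow, map_pow]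
  rw [Finset.prod_congr rfl h1, Finset.prod_mul_distrib, ← map_prod,
    Finset.prod_pow_eq_pow_sum]
  have h2 : ∑ i ∈ d.support, d i = d 0 + d 1 := by
    have : ∑ i ∈ d.support, d i = ∑ i : Fin 2, d i := by
      refine Finset.sum_subset (Finset.subset_univ _) ?_
      intro i _ hi; exact Finsupp.notMem_support_iff.mp hi
    rw [this, Fin.sum_univ_two]
  rw [h2, MvPolynomial.monomial_eq, Finsupp.prod, map_mul]
  ring

open MvPolynomial in
private lemma coeff_bind_two {k : Type*} [Field k] (P : MvPolynomial (Fin 2) k)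
    (m : Fin 2 →₀ ℕ) :
    MvPolynomial.coeff m (MvPolynomial.bind₁
      (fun i : Fin 2 => MvPolynomial.C (2:k) * MvPolynomial.X i) P)
      = 2 ^ (m 0 + m 1) * MvPolynomial.coeff m P := by
  induction P using MvPolynomial.induction_on' with
  | monomial d r =>
    rw [bind_two, MvPolynomial.coeff_monomial, MvPolynomial.coeff_monomial]
    split_ifs with h
    · subst h; ring
    · ring
  | add p q hp hq =>
    rw [map_add, MvPolynomial.coeff_add, hp, hq, MvPolynomial.coeff_add, mul_add]

private lemma two_pow_ne_two {k : Type*} [Field k] [CharZero k] {w : ℕ} (hw : w ≠ 1) :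
    (2:k) ^ w ≠ 2 := by
  intro h
  have h' : ((2^w : ℕ) : k) = ((2 : ℕ) : k) := by push_cast; exact h
  have := Nat.cast_injective (R := k) h'
  rcases Nat.lt_or_ge w 1 with hlt | hge
  · interval_cases w <;> omega
  · have : 2 ^ 1 ≤ 2 ^ w := Nat.pow_le_pow_right (by norm_num) hge
    rcases Nat.lt_or_ge w 2 with h2 | h2
    · interval_cases w <;> omega
    · have : (2:ℕ) ^ 2 ≤ 2 ^ w := Nat.pow_le_pow_right (by norm_num) h2
      omega

private lemma fin2_weight_one {m : Fin 2 →₀ ℕ} (h : m 0 + m 1 = 1) :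
    m = Finsupp.single 0 1 ∨ m = Finsupp.single 1 1 := by
  rcases (by omega : (m 0 = 1 ∧ m 1 = 0) ∨ (m 0 = 0 ∧ m 1 = 1)) with ⟨h1, h2⟩ | ⟨h1, h2⟩
  · left; ext i; fin_cases i <;> simp [Finsupp.single_apply, h1, h2]
  · right; ext i; fin_cases i <;> simp [Finsupp.single_apply, h1, h2]

open MvPolynomial in
/-- If a polynomial in two variables satisfies `P(2s,2t) = 2·P(s,t)` as a function on a
characteristic-zero field, then it is homogeneous linear, so `P(1,1) = P(1,0) + P(0,1)`. -/
private lemma scalar_key {k : Type*} [Field k] [CharZero k] (P : MvPolynomial (Fin 2) k)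
    (h : ∀ s t : k, MvPolynomial.aeval ![2*s, 2*t] P = 2 * MvPolynomial.aeval ![s, t] P) :
    MvPolynomial.aeval ![(1:k), 1] P
      = MvPolynomial.aeval ![(1:k), 0] P + MvPolynomial.aeval ![(0:k), 1] P := by
  have aeval_eq : ∀ (x : Fin 2 → k) (Q : MvPolynomial (Fin 2) k),
      MvPolynomial.aeval x Q = MvPolynomial.eval x Q := by
    intro x Q; rw [← MvPolynomial.coe_aeval_eq_eval]; rfl
  set Q := MvPolynomial.bind₁ (fun i : Fin 2 => MvPolynomial.C (2:k) * MvPolynomial.X i) P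
    with hQdef
  have hQP : Q = MvPolynomial.C 2 * P := by
    apply MvPolynomial.funext
    intro x
    have h1 : MvPolynomial.eval x Q = MvPolynomial.aeval (fun i => 2 * x i) P := by
      rw [← aeval_eq, hQdef, MvPolynomial.aeval_bind₁]
      rw [show (fun i : Fin 2 => MvPolynomial.aeval x (MvPolynomial.C (2:k) * MvPolynomial.X i))
        = (fun i : Fin 2 => 2 * x i) from by funext i; simp]
    have h2 : (fun i : Fin 2 => 2 * x i) = ![2 * x 0, 2 * x 1] := by
      funext i; fin_cases i <;> simp
    have h3 : x = ![x 0, x 1] := by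
      funext i; fin_cases i <;> simp
    rw [h1, h2, h (x 0) (x 1), ← h3, aeval_eq, MvPolynomial.eval_mul, MvPolynomial.eval_C]
  have hcoeff : ∀ m : Fin 2 →₀ ℕ, m 0 + m 1 ≠ 1 → MvPolynomial.coeff m P = 0 := by
    intro m hm
    have h1 : MvPolynomial.coeff m Q = 2 ^ (m 0 + m 1) * MvPolynomial.coeff m P :=
      coeff_bind_two P m
    have h2 : MvPolynomial.coeff m Q = 2 * MvPolynomial.coeff m P := by
      rw [hQP, MvPolynomial.coeff_C_mul]
    have h3 : ((2:k) ^ (m 0 + m 1) - 2) * MvPolynomial.coeff m P = 0 := by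
      rw [sub_mul]; rw [h1] at h2; rw [h2]; ring
    rcases mul_eq_zero.mp h3 with h4 | h4
    · exact absurd (sub_eq_zero.mp h4) (two_pow_ne_two hm)
    · exact h4
  have hrep : P = MvPolynomial.C (MvPolynomial.coeff (Finsupp.single 0 1) P) * MvPolynomial.X 0
      + MvPolynomial.C (MvPolynomial.coeff (Finsupp.single 1 1) P) * MvPolynomial.X 1 := by
    apply MvPolynomial.ext
    intro m
    rw [MvPolynomial.coeff_add, MvPolynomial.coeff_C_mul, MvPolynomial.coeff_C_mul,
      MvPolynomial.coeff_X', MvPolynomial.coeff_X']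
    by_cases hw : m 0 + m 1 = 1
    · rcases fin2_weight_one hw with rfl | rfl
      · have hne : ¬ (Finsupp.single (1 : Fin 2) 1 = Finsupp.single (0 : Fin 2) 1) := by
          intro hcon
          have := DFunLike.congr_fun hcon 0
          simp [Finsupp.single_apply] at this
        rw [if_pos rfl, if_neg hne]; ring
      · have hne : ¬ (Finsupp.single (0 : Fin 2) 1 = Finsupp.single (1 : Fin 2) 1) := by
          intro hcon
          have := DFunLike.congr_fun hcon 0
          simp [Finsupp.single_apply] at this
        rw [if_pos rfl, if_neg hne]; ring
    · rw [hcoeff m hw]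
      have hne0 : ¬ (Finsupp.single (0 : Fin 2) 1 = m) := by
        intro hcon; apply hw; rw [← hcon]; simp [Finsupp.single_apply]
      have hne1 : ¬ (Finsupp.single (1 : Fin 2) 1 = m) := by
        intro hcon; apply hw; rw [← hcon]; simp [Finsupp.single_apply]
      rw [if_neg hne0, if_neg hne1]; ring
  rw [hrep]
  simp

section EvalInfra

variable (k : Type*) [Field k]

/-- Evaluation of a polynomial in two variables, as a linear map. -/
noncomputable def evk (s t : k) : MvPolynomial (Fin 2) k →ₗ[k] k :=
  (MvPolynomial.aeval ![s, t]).toLinearMap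

/-- Evaluation `A ⊗ V → V`, `p ⊗ v ↦ p(s,t) • v`. -/
noncomputable def evV (V : Type*) [AddCommGroup V] [Module k V] (s t : k) :
    MvPolynomial (Fin 2) k ⊗[k] V →ₗ[k] V :=
  TensorProduct.lift ((LinearMap.lsmul k V).comp (evk k s t))

@[simp] lemma evV_tmul {V : Type*} [AddCommGroup V] [Module k V] (s t : k)
    (p : MvPolynomial (Fin 2) k) (v : V) :
    evV k V s t (p ⊗ₜ[k] v) = (MvPolynomial.aeval ![s, t] p) • v := rfl

/-- `A ⊗ L` is a `k`-Lie algebra (restriction of scalars of the base-change Lie algebra). -/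
noncomputable instance tensorLieAlgebra (L : Type*) [LieRing L] [LieAlgebra k L] :
    LieAlgebra k (MvPolynomial (Fin 2) k ⊗[k] L) where
  lie_smul c x y := by
    rw [← algebraMap_smul (MvPolynomial (Fin 2) k) c y,
      lie_smul (algebraMap k (MvPolynomial (Fin 2) k) c) x y,
      algebraMap_smul]

/-- Evaluation as a Lie algebra homomorphism `A ⊗ L →ₗ⁅k⁆ L`. -/
noncomputable def evLie (L : Type*) [LieRing L] [LieAlgebra k L] (s t : k) :
    (MvPolynomial (Fin 2) k ⊗[k] L) →ₗ⁅k⁆ L :=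
  { evV k L s t with
    map_lie' := by
      intro x y
      change evV k L s t ⁅x, y⁆ = ⁅evV k L s t x, evV k L s t y⁆
      induction x using TensorProduct.induction_on with
      | zero => rw [zero_lie y]; simp
      | tmul p v =>
        induction y using TensorProduct.induction_on with
        | zero => rw [lie_zero (p ⊗ₜ[k] v)]; simp
        | tmul q w =>
          rw [LieAlgebra.ExtendScalars.bracket_tmul]
          simp only [evV_tmul, map_mul]
          rw [smul_lie, lie_smul, smul_smul]
        | add y₁ y₂ h₁ h₂ =>
          rw [lie_add (p ⊗ₜ[k] v) y₁ y₂, map_add, h₁, h₂, map_add, lie_add]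
      | add x₁ x₂ h₁ h₂ =>
        rw [add_lie x₁ x₂ y, map_add, h₁, h₂, map_add, add_lie] }

@[simp] lemma evLie_apply (L : Type*) [LieRing L] [LieAlgebra k L] (s t : k)
    (x : MvPolynomial (Fin 2) k ⊗[k] L) : evLie k L s t x = evV k L s t x := rfl

/-- Combination map `(A ⊗ V) ⊗ (A ⊗ W) → A ⊗ (V ⊗ W)`, `(p⊗v)⊗(q⊗w) ↦ pq ⊗ (v⊗w)`. -/
noncomputable def comb (V W : Type*) [AddCommGroup V] [Module k V]
    [AddCommGroup W] [Module k W] :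
    (MvPolynomial (Fin 2) k ⊗[k] V) →ₗ[k] (MvPolynomial (Fin 2) k ⊗[k] W) →ₗ[k]
      (MvPolynomial (Fin 2) k ⊗[k] (V ⊗[k] W)) :=
  LinearMap.compr₂ (TensorProduct.mk k _ _)
    ((TensorProduct.map (LinearMap.mul' k (MvPolynomial (Fin 2) k)) LinearMap.id).comp
      (TensorProduct.tensorTensorTensorComm k (MvPolynomial (Fin 2) k) V
        (MvPolynomial (Fin 2) k) W).toLinearMap)

lemma comb_tmul (V W : Type*) [AddCommGroup V] [Module k V] [AddCommGroup W] [Module k W]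
    (p q : MvPolynomial (Fin 2) k) (v : V) (w : W) :
    comb k V W (p ⊗ₜ[k] v) (q ⊗ₜ[k] w) = (p * q) ⊗ₜ[k] (v ⊗ₜ[k] w) := by
  simp [comb, TensorProduct.tensorTensorTensorComm_tmul]

lemma evV_comb (V W : Type*) [AddCommGroup V] [Module k V] [AddCommGroup W] [Module k W]
    (s t : k) (x : MvPolynomial (Fin 2) k ⊗[k] V) (y : MvPolynomial (Fin 2) k ⊗[k] W) :
    evV k (V ⊗[k] W) s t (comb k V W x y) = (evV k V s t x) ⊗ₜ[k] (evV k W s t y) := by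
  induction x using TensorProduct.induction_on with
  | zero => simp
  | tmul p v =>
    induction y using TensorProduct.induction_on with
    | zero => simp
    | tmul q w =>
      rw [comb_tmul]
      simp only [evV_tmul, map_mul, TensorProduct.tmul_smul, TensorProduct.smul_tmul',
        smul_smul]
      rw [mul_comm]
    | add y₁ y₂ h₁ h₂ => simp only [map_add, TensorProduct.tmul_add, h₁, h₂]
  | add x₁ x₂ h₁ h₂ => simp only [map_add, LinearMap.add_apply, TensorProduct.add_tmul, h₁, h₂]

/-- Scalar extraction `A ⊗ V → A`, `p ⊗ v ↦ ℓ(v) · p`. -/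
noncomputable def lam (V : Type*) [AddCommGroup V] [Module k V] (ℓ : V →ₗ[k] k) :
    (MvPolynomial (Fin 2) k ⊗[k] V) →ₗ[k] MvPolynomial (Fin 2) k :=
  TensorProduct.lift (((LinearMap.lsmul k (MvPolynomial (Fin 2) k)).comp ℓ).flip)

lemma lam_evV (V : Type*) [AddCommGroup V] [Module k V] (ℓ : V →ₗ[k] k) (s t : k)
    (x : MvPolynomial (Fin 2) k ⊗[k] V) :
    ℓ (evV k V s t x) = MvPolynomial.aeval ![s, t] (lam k V ℓ x) := by
  induction x using TensorProduct.induction_on with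
  | zero => simp
  | tmul p v =>
    simp only [evV_tmul, map_smul, lam, TensorProduct.lift.tmul]
    simp [LinearMap.lsmul, smul_eq_mul, mul_comm]
  | add x₁ x₂ h₁ h₂ => simp only [map_add, h₁, h₂]

end EvalInfra

section LieMaps

variable (k : Type*) [Field k] (n : ℕ)

/-- The skip homomorphism `L_n → L_{n+1}` determined by an injection of generators:
generator `j` is sent to `x_j` if `j < p` and to `x_{j+1}` otherwise (0-indexed). -/
noncomputable def skipHom (p : ℕ) : Ln k n →ₗ⁅k⁆ Ln k (n + 1) :=
  FreeLieAlgebra.lift k (fun j : Fin n =>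
    if (j : ℕ) < p then FreeLieAlgebra.of k j.castSucc else FreeLieAlgebra.of k j.succ)

/-- The two-parameter interpolation `ψ_{s,t}` between adjacent skip maps at position `ι`. -/
noncomputable def psiHom (ι : Fin n) (s t : k) : Ln k n →ₗ⁅k⁆ Ln k (n + 1) :=
  FreeLieAlgebra.lift k (fun j : Fin n =>
    if (j : ℕ) < (ι : ℕ) then FreeLieAlgebra.of k j.castSucc
    else if j = ι then s • FreeLieAlgebra.of k j.castSucc + t • FreeLieAlgebra.of k j.succ
    else FreeLieAlgebra.of k j.succ)

/-- The formal (polynomial-coefficient) version of `ψ`. -/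
noncomputable def PsiHom (ι : Fin n) :
    Ln k n →ₗ⁅k⁆ (MvPolynomial (Fin 2) k ⊗[k] Ln k (n + 1)) :=
  FreeLieAlgebra.lift k (fun j : Fin n =>
    if (j : ℕ) < (ι : ℕ) then (1 : MvPolynomial (Fin 2) k) ⊗ₜ[k] FreeLieAlgebra.of k j.castSucc
    else if j = ι then
      (MvPolynomial.X 0 : MvPolynomial (Fin 2) k) ⊗ₜ[k] FreeLieAlgebra.of k j.castSucc
        + (MvPolynomial.X 1 : MvPolynomial (Fin 2) k) ⊗ₜ[k] FreeLieAlgebra.of k j.succ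
    else (1 : MvPolynomial (Fin 2) k) ⊗ₜ[k] FreeLieAlgebra.of k j.succ)

lemma evLie_PsiHom (ι : Fin n) (s t : k) :
    (evLie k (Ln k (n + 1)) s t).comp (PsiHom k n ι) = psiHom k n ι s t := by
  apply FreeLieAlgebra.hom_ext
  intro j
  simp only [LieHom.comp_apply, PsiHom, psiHom, FreeLieAlgebra.lift_of_apply]
  split_ifs with h1 h2
  · simp
  · simp [MvPolynomial.aeval_X]
  · simp

lemma psiHom_one_one (ι : Fin n) : coface k n ι.succ.castSucc = psiHom k n ι 1 1 := by
  apply FreeLieAlgebra.hom_ext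
  intro j
  simp only [coface, psiHom, FreeLieAlgebra.lift_of_apply, cofaceGen]
  have hv : ((ι.succ.castSucc : Fin (n + 2)) : ℕ) = (ι : ℕ) + 1 := by simp
  rw [hv]
  by_cases h1 : (j : ℕ) < (ι : ℕ)
  · rw [if_pos (by omega), if_pos h1]
  · rw [if_neg (by omega)]
    by_cases h2 : (j : ℕ) = (ι : ℕ)
    · rw [if_pos (by omega), if_neg h1, if_pos (Fin.ext h2)]
      simp
    · rw [if_neg (by omega), if_neg h1, if_neg (fun hc => h2 (by rw [hc]))]

lemma psiHom_one_zero (ι : Fin n) : psiHom k n ι 1 0 = skipHom k n ((ι : ℕ) + 1) := by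
  apply FreeLieAlgebra.hom_ext
  intro j
  simp only [psiHom, skipHom, FreeLieAlgebra.lift_of_apply]
  by_cases h1 : (j : ℕ) < (ι : ℕ)
  · rw [if_pos h1, if_pos (by omega)]
  · rw [if_neg h1]
    by_cases h2 : j = ι
    · rw [if_pos h2, if_pos (by omega : (j : ℕ) < (ι : ℕ) + 1)]
      · simp
    · rw [if_neg h2, if_neg (by
        have : (j : ℕ) ≠ (ι : ℕ) := fun hc => h2 (Fin.ext hc)
        omega)]

lemma psiHom_zero_one (ι : Fin n) : psiHom k n ι 0 1 = skipHom k n (ι : ℕ) := by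
  apply FreeLieAlgebra.hom_ext
  intro j
  simp only [psiHom, skipHom, FreeLieAlgebra.lift_of_apply]
  by_cases h1 : (j : ℕ) < (ι : ℕ)
  · rw [if_pos h1, if_pos h1]
  · rw [if_neg h1, if_neg h1]
    by_cases h2 : j = ι
    · rw [if_pos h2]; simp
    · rw [if_neg h2]

lemma psiHom_scale (ι : Fin n) (s t u : k) :
    psiHom k n ι (u * s) (u * t) = (psiHom k n ι s t).comp (scaleHom k n ι u) := by
  apply FreeLieAlgebra.hom_ext
  intro j
  rw [LieHom.comp_apply]
  have hs : scaleHom k n ι u (FreeLieAlgebra.of k j)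
      = if j = ι then u • FreeLieAlgebra.of k j else FreeLieAlgebra.of k j := by
    rw [scaleHom, FreeLieAlgebra.lift_of_apply]
  rw [hs]
  by_cases h2 : j = ι
  · subst h2
    rw [if_pos rfl, map_smul, psiHom, psiHom, FreeLieAlgebra.lift_of_apply,
      FreeLieAlgebra.lift_of_apply, if_neg (lt_irrefl _), if_neg (lt_irrefl _),
      if_pos rfl, if_pos rfl, smul_add, smul_smul, smul_smul]
  · rw [if_neg h2, psiHom, psiHom, FreeLieAlgebra.lift_of_apply, FreeLieAlgebra.lift_of_apply]
    by_cases h1 : (j : ℕ) < (ι : ℕ)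
    · rw [if_pos h1, if_pos h1]
    · rw [if_neg h1, if_neg h1, if_neg h2, if_neg h2]

lemma coface_zero : coface k n 0 = skipHom k n 0 := by
  apply FreeLieAlgebra.hom_ext
  intro j
  simp [coface, skipHom, cofaceGen, FreeLieAlgebra.lift_of_apply]

lemma coface_last : coface k n (Fin.last (n + 1)) = skipHom k n n := by
  apply FreeLieAlgebra.hom_ext
  intro j
  simp only [coface, skipHom, cofaceGen, FreeLieAlgebra.lift_of_apply, Fin.val_last]
  rw [if_pos (by omega : (j : ℕ) + 1 < n + 1), if_pos (by omega : (j : ℕ) < n)]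

end LieMaps

section KeyLemma

variable {k : Type*} [Field k] [CharZero k] {n : ℕ}

lemma Fmap_mk {L L' : Type*} [LieRing L] [LieAlgebra k L] [LieRing L'] [LieAlgebra k L']
    (f : L →ₗ⁅k⁆ L') (x : L ⊗[k] L) :
    Fmap f (Submodule.Quotient.mk x)
      = Submodule.Quotient.mk (TensorProduct.map f.toLinearMap f.toLinearMap x) := by
  simp [Fmap, Submodule.mapQ_apply]

/-- The key additivity lemma: for a multilinear `α`, `F(ψ_{1,1})α = F(ψ_{1,0})α + F(ψ_{0,1})α`. -/
lemma key_additivity (ι : Fin n) (α : FF k (Ln k n))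
    (hml : ∀ t : k, Fmap (scaleHom k n ι t) α = t • α) :
    Fmap (psiHom k n ι 1 1) α
      = Fmap (psiHom k n ι 1 0) α + Fmap (psiHom k n ι 0 1) α := by
  obtain ⟨x, rfl⟩ := Submodule.Quotient.mk_surjective _ α
  set L' := Ln k (n + 1)
  -- the bilinear map (a, b) ↦ comb (Ψ a) (Ψ b), lifted to the tensor product
  set Θ : (Ln k n ⊗[k] Ln k n) →ₗ[k] MvPolynomial (Fin 2) k ⊗[k] (L' ⊗[k] L') :=
    TensorProduct.lift (LinearMap.compl₂
      ((comb k L' L').comp (PsiHom k n ι).toLinearMap) (PsiHom k n ι).toLinearMap) with hΘ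
  have hq : ∀ (s t : k) (y : Ln k n ⊗[k] Ln k n),
      TensorProduct.map (psiHom k n ι s t).toLinearMap (psiHom k n ι s t).toLinearMap y
        = evV k (L' ⊗[k] L') s t (Θ y) := by
    intro s t y
    induction y using TensorProduct.induction_on with
    | zero => simp
    | tmul a b =>
      rw [hΘ]
      simp only [TensorProduct.map_tmul, TensorProduct.lift.tmul, LinearMap.compl₂_apply,
        LinearMap.comp_apply, LieHom.coe_toLinearMap]
      rw [evV_comb]
      have ha : evV k L' s t (PsiHom k n ι a) = psiHom k n ι s t a := by
        have := DFunLike.congr_fun (evLie_PsiHom k n ι s t) a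
        simpa using this
      have hb : evV k L' s t (PsiHom k n ι b) = psiHom k n ι s t b := by
        have := DFunLike.congr_fun (evLie_PsiHom k n ι s t) b
        simpa using this
      rw [ha, hb]
    | add y₁ y₂ h₁ h₂ => simp only [map_add, h₁, h₂]
  -- it suffices to check the identity after applying an arbitrary linear functional
  rw [← sub_eq_zero]
  have hdual : ∀ ℓ : Module.Dual k (FF k L'),
      ℓ (Fmap (psiHom k n ι 1 1) (Submodule.Quotient.mk x)
        - (Fmap (psiHom k n ι 1 0) (Submodule.Quotient.mk x)
          + Fmap (psiHom k n ι 0 1) (Submodule.Quotient.mk x))) = 0 := by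
    intro ℓ
    set ℓ' : (L' ⊗[k] L') →ₗ[k] k := ℓ.comp (Frel k L').mkQ with hℓ'
    set P : MvPolynomial (Fin 2) k := lam k (L' ⊗[k] L') ℓ' (Θ x) with hP
    have hval : ∀ s t : k, ℓ (Fmap (psiHom k n ι s t) (Submodule.Quotient.mk x))
        = MvPolynomial.aeval ![s, t] P := by
      intro s t
      rw [Fmap_mk, hq s t x, hP, ← lam_evV]
      rfl
    have hpoly : ∀ s t : k, MvPolynomial.aeval ![2*s, 2*t] P
        = 2 * MvPolynomial.aeval ![s, t] P := by
      intro s t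
      rw [← hval, ← hval]
      have hcomp : Fmap (psiHom k n ι (2*s) (2*t)) (Submodule.Quotient.mk x)
          = Fmap (psiHom k n ι s t) (Fmap (scaleHom k n ι 2) (Submodule.Quotient.mk x)) := by
        rw [psiHom_scale k n ι s t 2, Fmap_mk, Fmap_mk, Fmap_mk]
        congr 1
        rw [← LinearMap.comp_apply, ← TensorProduct.map_comp]
        rfl
      rw [hcomp, hml 2, map_smul, map_smul, smul_eq_mul]
    have := scalar_key P hpoly
    rw [map_sub, map_add, hval, hval, hval, this]
    ring
  exact (Module.forall_dual_apply_eq_zero_iff k _).mp hdual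

end KeyLemma

/-- every multilinear alternating element `α ∈ H_n ⊆ F_n` satisfies
`δ α = 0` in `F_{n+1}`. -/
theorem statement_5 (k : Type*) [Field k] [CharZero k] (n : ℕ)
    (α : FF k (Ln k n)) (hα : α ∈ Hsub k n) :
    cosimp k n α = 0 := by
  -- extract the multilinearity part of the hypothesis
  have hml : ∀ (i : Fin n) (t : k), Fmap (scaleHom k n i t) α = t • α := by
    intro i t
    have h1 := (Submodule.mem_inf.mp hα).1
    rw [Submodule.mem_iInf] at h1
    have h2 := (Submodule.mem_iInf _).mp (h1 i) t
    rw [LinearMap.mem_ker, LinearMap.sub_apply, LinearMap.smul_apply, LinearMap.id_apply,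
      sub_eq_zero] at h2
    exact h2
  set d : ℕ → FF k (Ln k (n + 1)) :=
    fun p => if p ≤ n then Fmap (skipHom k n p) α else 0 with hd
  have main : ∀ i : Fin (n + 2), Fmap (coface k n i) α
      = d (i : ℕ) + (if (i : ℕ) = 0 then 0 else d ((i : ℕ) - 1)) := by
    intro i
    have hlt := i.isLt
    rcases Nat.lt_or_ge (i : ℕ) 1 with h0 | h1
    · have hi : i = 0 := Fin.ext (by simp only [Fin.val_zero]; omega)
      subst hi
      rw [coface_zero]
      simp [hd]
    · rcases Nat.lt_or_ge (i : ℕ) (n + 1) with hle | hge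
      · -- middle case 1 ≤ i ≤ n
        obtain ⟨m, hm⟩ : ∃ m : Fin n, i = m.succ.castSucc :=
          ⟨⟨(i : ℕ) - 1, by omega⟩, Fin.ext (by
            simp only [Fin.coe_castSucc, Fin.val_succ]
            omega)⟩
        have hm2 : (m : ℕ) = (i : ℕ) - 1 := by
          have := congrArg Fin.val hm
          simp only [Fin.coe_castSucc, Fin.val_succ] at this
          omega
        have hc : coface k n i = psiHom k n m 1 1 := by
          rw [hm]; exact psiHom_one_one k n m
        rw [hc, key_additivity m α (hml m), psiHom_one_zero, psiHom_zero_one, hm2]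
        have e1 : ((i : ℕ) - 1) + 1 = (i : ℕ) := by omega
        rw [e1]
        simp only [hd]
        rw [if_pos (show (i : ℕ) ≤ n by omega), if_neg (show ¬ (i : ℕ) = 0 by omega),
          if_pos (show (i : ℕ) - 1 ≤ n by omega)]
      · -- last case i = n + 1
        have hi : i = Fin.last (n + 1) := Fin.ext (by simp only [Fin.val_last]; omega)
        subst hi
        rw [coface_last]
        simp only [hd, Fin.val_last]
        rw [if_neg (show ¬ n + 1 ≤ n by omega), if_neg (show ¬ n + 1 = 0 by omega)]
        have e : n + 1 - 1 = n := by omega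
        rw [e, if_pos (le_refl n), zero_add]
  have hcos : cosimp k n α
      = ∑ i : Fin (n + 2), ((-1 : k) ^ (i : ℕ)) •
          (d (i : ℕ) + (if (i : ℕ) = 0 then 0 else d ((i : ℕ) - 1))) := by
    rw [cosimp, LinearMap.sum_apply]
    refine Finset.sum_congr rfl ?_
    intro i _
    rw [LinearMap.smul_apply, main i]
  rw [hcos]
  rw [Fin.sum_univ_eq_sum_range
    (fun p => ((-1 : k) ^ p) • (d p + (if p = 0 then 0 else d (p - 1))))]
  have split : ∑ p ∈ Finset.range (n + 2),
      ((-1 : k) ^ p) • (d p + (if p = 0 then 0 else d (p - 1)))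
      = (∑ p ∈ Finset.range (n + 2), ((-1 : k) ^ p) • d p)
        + ∑ p ∈ Finset.range (n + 2), ((-1 : k) ^ p) •
            (if p = 0 then 0 else d (p - 1)) := by
    rw [← Finset.sum_add_distrib]
    refine Finset.sum_congr rfl ?_
    intro p _
    rw [smul_add]
  rw [split]
  have hS1 : ∑ p ∈ Finset.range (n + 2), ((-1 : k) ^ p) • d p
      = ∑ p ∈ Finset.range (n + 1), ((-1 : k) ^ p) • d p := by
    have hdn : d (n + 1) = 0 := by
      simp only [hd]
      rw [if_neg (by omega : ¬ n + 1 ≤ n)]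
    rw [Finset.sum_range_succ, hdn, smul_zero, add_zero]
  have hS2 : ∑ p ∈ Finset.range (n + 2), ((-1 : k) ^ p) •
        (if p = 0 then (0 : FF k (Ln k (n + 1))) else d (p - 1))
      = ∑ p ∈ Finset.range (n + 1), ((-1 : k) ^ (p + 1)) • d p := by
    rw [Finset.sum_range_succ' (fun p => ((-1 : k) ^ p) •
      (if p = 0 then (0 : FF k (Ln k (n + 1))) else d (p - 1))) (n + 1)]
    have h0 : ((-1 : k) ^ (0:ℕ)) • (if (0:ℕ) = 0 then (0 : FF k (Ln k (n + 1)))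
        else d (0 - 1)) = 0 := by
      rw [if_pos rfl, smul_zero]
    rw [h0, add_zero]
    refine Finset.sum_congr rfl ?_
    intro p _
    rw [if_neg (Nat.succ_ne_zero p), Nat.add_sub_cancel]
  rw [hS1, hS2, ← Finset.sum_add_distrib]
  refine Finset.sum_eq_zero ?_
  intro p _
  rw [pow_succ, mul_comm, neg_one_mul, neg_smul]
  exact add_neg_cancel _
end

section
/- The space F_2 is infinite-dimensional as a k-vector space. -/
open TensorProduct Polynomial

set_option linter.unusedSectionVars false

section Aux
variable (k : Type*) [Field k] [CharZero k]

attribute [local instance 100] LieRing.ofAssociativeRing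

local notation "Mat" => Matrix (Fin 2) (Fin 2) k[X]

noncomputable def Emat : Mat := !![0,1;0,0]
noncomputable def Fmat : Mat := !![0,0;X,0]

noncomputable def rho : FreeLieAlgebra k (Fin 2) →ₗ⁅k⁆ Mat :=
  FreeLieAlgebra.lift k (fun i => if i = 0 then Emat k else Fmat k)

noncomputable def trForm : Mat →ₗ[k] Mat →ₗ[k] k[X] :=
  (LinearMap.mul k Mat).compr₂ ((Matrix.traceLinearMap (Fin 2) k[X] k[X]).restrictScalars k)

noncomputable def T : (Ln k 2) ⊗[k] (Ln k 2) →ₗ[k] k[X] :=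
  TensorProduct.lift ((trForm k).compl₁₂ (rho k).toLinearMap (rho k).toLinearMap)

lemma T_apply (a b : Ln k 2) :
    T k (a ⊗ₜ[k] b) = (rho k a * rho k b).trace := rfl

lemma hker : Frel k (Ln k 2) ≤ LinearMap.ker (T k) := by
  rw [Frel, Submodule.span_le]
  rintro x (⟨a, b, rfl⟩ | ⟨a, b, c, rfl⟩) <;>
    simp only [SetLike.mem_coe, LinearMap.mem_ker, map_sub, T_apply, LieHom.map_lie,
      Ring.lie_def, mul_sub, sub_mul, Matrix.trace_sub]
  · rw [Matrix.trace_mul_comm]; ring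
  · simp only [← Matrix.mul_assoc]
    rw [Matrix.trace_mul_comm (rho k a * rho k c) (rho k b), ← Matrix.mul_assoc]
    ring

noncomputable def phi : FF k (Ln k 2) →ₗ[k] k[X] :=
  Submodule.liftQ _ (T k) (hker k)

lemma phi_pair (a b : Ln k 2) : phi k (pair a b) = (rho k a * rho k b).trace := rfl

noncomputable def w : ℕ → Ln k 2
  | 0 => FreeLieAlgebra.of k (1 : Fin 2)
  | (m+1) => (2⁻¹ : k) • ⁅FreeLieAlgebra.of k (1 : Fin 2), ⁅FreeLieAlgebra.of k (0 : Fin 2), w m⁆⁆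

lemma rho_of_zero : rho k (FreeLieAlgebra.of k (0 : Fin 2)) = Emat k := by
  simp [rho, FreeLieAlgebra.lift_of_apply]

lemma rho_of_one : rho k (FreeLieAlgebra.of k (1 : Fin 2)) = Fmat k := by
  simp [rho, FreeLieAlgebra.lift_of_apply]

lemma rho_w (m : ℕ) : rho k (w k m) = !![0, 0; X ^ (m+1), 0] := by
  induction m with
  | zero => rw [w, rho_of_one]; simp [Fmat]
  | succ m ih =>
    rw [w, map_smul, LieHom.map_lie, LieHom.map_lie, ih, rho_of_zero, rho_of_one]
    simp only [Ring.lie_def, Emat, Fmat, Matrix.mul_fin_two, Matrix.smul_apply]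
    ext i j
    fin_cases i <;> fin_cases j <;>
      simp [Algebra.smul_def, algebraMap_eq] <;> ring_nf
    rw [← pow_add, coeff_X_pow]

lemma phi_w (m : ℕ) :
    phi k (pair (FreeLieAlgebra.of k (0 : Fin 2)) (w k m)) = X ^ (m+1) := by
  rw [phi_pair, rho_of_zero, rho_w]
  simp [Emat, Matrix.mul_fin_two, Matrix.trace_fin_two]

end Aux

/-- `F_2` is infinite-dimensional as a `k`-vector space. -/
theorem statement_14 (k : Type*) [Field k] [CharZero k] :
    ¬ FiniteDimensional k (FF k (Ln k 2)) := by
  intro h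
  have hmon : LinearIndependent k fun m : ℕ => (X : k[X]) ^ (m + 1) := by
    have := (Polynomial.basisMonomials k).linearIndependent.comp
      Nat.succ Nat.succ_injective
    simpa [Function.comp_def, Polynomial.X_pow_eq_monomial] using this
  have hli : LinearIndependent k
      fun m : ℕ => (pair (FreeLieAlgebra.of k (0 : Fin 2)) (w k m) : FF k (Ln k 2)) := by
    apply LinearIndependent.of_comp (phi k)
    have he : (⇑(phi k) ∘ fun m : ℕ =>
        (pair (FreeLieAlgebra.of k (0 : Fin 2)) (w k m) : FF k (Ln k 2))) =
        fun m : ℕ => (X : k[X]) ^ (m + 1) := funext fun m => phi_w k m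
    rw [he]; exact hmon
  exact Module.Finite.not_linearIndependent_of_infinite _ hli
end
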